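/- Let G be a locally compact topological group with a left-invariant Haar measure μ, and let K be a compact open subgroup of G. Then for every g ∈ G one has μ(Kg) · μ(Kg⁻¹K) = μ(K) · μ(KgK), where Kg = {kg : k ∈ K}, KgK = {k₁gk₂ : k₁, k₂ ∈ K}, and Kg⁻¹K = {k₁g⁻¹k₂ : k₁, k₂ ∈ K}. -/

import Mathlib

open Pointwise MeasureTheory

section Aux

variable {G : Type*} [Group G] [TopologicalSpace G] [IsTopologicalGroup G]
    [MeasurableSpace G] [BorelSpace G]

private lemma aux_mul_subgroup {H K : Subgroup G} (h : H ≤ K) :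
    (K : Set G) * (H : Set G) = (K : Set G) := by
  apply subset_antisymm
  · rintro x ⟨a, ha, b, hb, rfl⟩
    exact K.mul_mem ha (h hb)
  · intro x hx
    exact ⟨x, hx, 1, H.one_mem, mul_one x⟩

private lemma aux_coset_meas (μ : Measure G) [μ.IsMulLeftInvariant] (K : Subgroup G)
    (hKopen : IsOpen (K : Set G)) {A : Set G} (hA : IsCompact A)
    (hAK : A * (K : Set G) = A) :
    μ A = ((QuotientGroup.mk '' A : Set (G ⧸ K)).ncard : ENNReal) * μ (K : Set G) := by
  set T : Set (G ⧸ K) := QuotientGroup.mk '' A with hT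
  have hfiber : ∀ q : G ⧸ K,
      (QuotientGroup.mk : G → G ⧸ K) ⁻¹' ({q} : Set (G ⧸ K)) = Quotient.out q • (K : Set G) := by
    intro q
    rw [← QuotientGroup.eq_class_eq_leftCoset]
    ext x
    simp only [Set.mem_preimage, Set.mem_singleton_iff, Set.mem_setOf_eq, QuotientGroup.out_eq']
  have hcover : A ⊆ ⋃ a ∈ A, a • (K : Set G) := by
    intro x hx
    exact Set.mem_biUnion hx ⟨1, K.one_mem, by simp⟩
  obtain ⟨t, hts, htfin, hcov⟩ :=
    hA.elim_finite_subcover_image (fun a _ => hKopen.smul a) hcover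
  have hTfin : T.Finite := by
    apply (htfin.image (QuotientGroup.mk : G → G ⧸ K)).subset
    rintro q ⟨x, hx, rfl⟩
    obtain ⟨a, hat, hxa⟩ := Set.mem_iUnion₂.mp (hcov hx)
    obtain ⟨k, hk, rfl⟩ := hxa
    refine ⟨a, hat, ?_⟩
    symm
    rw [QuotientGroup.eq]
    simpa using hk
  have hdecomp : A = ⋃ q ∈ hTfin.toFinset, (QuotientGroup.mk : G → G ⧸ K) ⁻¹' {q} := by
    ext x
    simp only [Set.mem_iUnion, Set.Finite.mem_toFinset, Set.mem_preimage, Set.mem_singleton_iff]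
    constructor
    · exact fun hx => ⟨_, ⟨x, hx, rfl⟩, rfl⟩
    · rintro ⟨q, ⟨a, ha, rfl⟩, hq⟩
      have hmem : a⁻¹ * x ∈ K := QuotientGroup.eq.mp hq.symm
      rw [← hAK]
      exact ⟨a, ha, a⁻¹ * x, hmem, by group⟩
  rw [hdecomp, measure_biUnion_finset ?_ ?_]
  · have : ∀ q ∈ hTfin.toFinset,
        μ ((QuotientGroup.mk : G → G ⧸ K) ⁻¹' {q}) = μ (K : Set G) := by
      intro q _
      rw [hfiber q, measure_smul]
    rw [Finset.sum_congr rfl this, Finset.sum_const, nsmul_eq_mul,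
      Set.ncard_eq_toFinset_card T hTfin]
  · intro q _ q' _ hne
    exact Disjoint.preimage _ (Set.disjoint_singleton.mpr hne)
  · intro q _
    rw [hfiber q]
    exact ((hKopen.smul _).measurableSet)

end Aux

/-- For a compact open subgroup `K` of a locally compact group with left Haar
measure `μ`, one has `μ(Kg) * μ(Kg⁻¹K) = μ(K) * μ(KgK)` for every `g`. -/
theorem stmt5 {G : Type*} [Group G] [TopologicalSpace G] [IsTopologicalGroup G]
    [LocallyCompactSpace G] [MeasurableSpace G] [BorelSpace G]
    (μ : Measure G) [μ.IsHaarMeasure]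
    (K : Subgroup G) (hKcomp : IsCompact (K : Set G)) (hKopen : IsOpen (K : Set G))
    (g : G) :
    μ ((K : Set G) * {g}) * μ ((K : Set G) * {g⁻¹} * (K : Set G)) =
      μ (K : Set G) * μ ((K : Set G) * {g} * (K : Set G)) := by
  classical
  set s : Set G := (K : Set G) with hs
  set L : Subgroup G := Subgroup.map (MulAut.conj g⁻¹).toMonoidHom K with hLdef
  have hmemL : ∀ x : G, x ∈ L ↔ g * x * g⁻¹ ∈ K := by
    intro x
    constructor
    · rintro ⟨k, hk, rfl⟩
      have e : g * (MulAut.conj g⁻¹).toMonoidHom k * g⁻¹ = k := by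
        simp [MulAut.conj_apply]; group
      rw [e]; exact hk
    · intro hx
      refine ⟨g * x * g⁻¹, hx, ?_⟩
      simp [MulAut.conj_apply]; group
  set H : Subgroup G := K ⊓ L with hHdef
  have hHopen : IsOpen (H : Set G) := by
    have hLopen : IsOpen (L : Set G) := by
      have e : (L : Set G) = (fun x => g * x * g⁻¹) ⁻¹' s := by
        ext x; exact hmemL x
      rw [e]
      exact hKopen.preimage (by continuity)
    have e : (H : Set G) = (K : Set G) ∩ (L : Set G) := rfl
    rw [e]
    exact hKopen.inter hLopen
  -- `g • L = Kg`
  have hgL : g • (L : Set G) = s * {g} := by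
    ext x
    simp only [Set.mem_smul_set, Set.mul_singleton, Set.mem_image, SetLike.mem_coe, hmemL,
      smul_eq_mul]
    constructor
    · rintro ⟨l, hl, rfl⟩
      exact ⟨g * l * g⁻¹, hl, by group⟩
    · rintro ⟨k, hk, rfl⟩
      refine ⟨g⁻¹ * (k * g), ?_, by group⟩
      have e : g * (g⁻¹ * (k * g)) * g⁻¹ = k := by group
      rw [e]; exact hk
  have hLcomp : IsCompact (L : Set G) := by
    have e : (L : Set G) = g⁻¹ • (s * {g}) := by
      rw [← hgL, inv_smul_smul]
    rw [e]
    exact (hKcomp.mul isCompact_singleton).smul g⁻¹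
  -- measure decompositions
  have hss : s * s = s := aux_mul_subgroup (le_refl K)
  have hsH : s * (H : Set G) = s := aux_mul_subgroup inf_le_left
  have hLH : (L : Set G) * (H : Set G) = (L : Set G) := aux_mul_subgroup inf_le_right
  have hAg : (s * {g} * s) * s = s * {g} * s := by rw [mul_assoc, hss]
  have hAg' : (s * {g⁻¹} * s) * s = s * {g⁻¹} * s := by rw [mul_assoc, hss]
  have hm1 := aux_coset_meas μ K hKopen ((hKcomp.mul isCompact_singleton).mul hKcomp) hAg
  have hm2 := aux_coset_meas μ K hKopen ((hKcomp.mul isCompact_singleton).mul hKcomp) hAg'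
  have hmL := aux_coset_meas μ H hHopen hLcomp hLH
  have hmK := aux_coset_meas μ H hHopen hKcomp hsH
  -- the two coset-counting bijections
  let f₁ : G ⧸ H → G ⧸ K := Quotient.map' (fun x => g * x) (by
    intro a b hab
    rw [QuotientGroup.leftRel_apply] at hab ⊢
    have e : (g * a)⁻¹ * (g * b) = a⁻¹ * b := by group
    rw [e]
    exact (Subgroup.mem_inf.mp hab).1)
  let f₂ : G ⧸ H → G ⧸ K := Quotient.map' (fun x => x * g⁻¹) (by
    intro a b hab
    rw [QuotientGroup.leftRel_apply] at hab ⊢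
    have e : (a * g⁻¹)⁻¹ * (b * g⁻¹) = g * (a⁻¹ * b) * g⁻¹ := by group
    rw [e]
    exact (hmemL _).mp (Subgroup.mem_inf.mp hab).2)
  have hf₁ : ∀ x : G, f₁ ((x : G ⧸ H)) = ((g * x : G) : G ⧸ K) := fun x => rfl
  have hf₂ : ∀ x : G, f₂ ((x : G ⧸ H)) = ((x * g⁻¹ : G) : G ⧸ K) := fun x => rfl
  have himg1 : f₁ '' (QuotientGroup.mk '' (L : Set G)) = QuotientGroup.mk '' (s * {g} * s) := by
    ext q
    constructor
    · rintro ⟨_, ⟨l, hl, rfl⟩, rfl⟩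
      refine ⟨g * l, ?_, (hf₁ l).symm⟩
      have hk : g * l * g⁻¹ ∈ K := (hmemL l).mp hl
      exact ⟨(g * l * g⁻¹) * g, ⟨g * l * g⁻¹, hk, g, rfl, rfl⟩, 1, K.one_mem, by group⟩
    · rintro ⟨x, ⟨u, ⟨k, hk, w, hw, rfl⟩, v, hv, rfl⟩, rfl⟩
      obtain rfl : g = w := (Set.mem_singleton_iff.mp hw).symm
      have hlmem : g⁻¹ * (k * g) ∈ L := by
        rw [hmemL]
        have e : g * (g⁻¹ * (k * g)) * g⁻¹ = k := by group
        rw [e]; exact hk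
      refine ⟨(g⁻¹ * (k * g) : G), ⟨g⁻¹ * (k * g), hlmem, rfl⟩, ?_⟩
      rw [hf₁]
      rw [QuotientGroup.eq]
      have e : (g * (g⁻¹ * (k * g)))⁻¹ * (k * g * v) = v := by group
      rw [e]; exact hv
  have himg2 : f₂ '' (QuotientGroup.mk '' s) = QuotientGroup.mk '' (s * {g⁻¹} * s) := by
    ext q
    constructor
    · rintro ⟨_, ⟨k, hk, rfl⟩, rfl⟩
      refine ⟨k * g⁻¹, ?_, (hf₂ k).symm⟩
      exact ⟨k * g⁻¹, ⟨k, hk, g⁻¹, rfl, rfl⟩, 1, K.one_mem, by group⟩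
    · rintro ⟨x, ⟨u, ⟨k, hk, w, hw, rfl⟩, v, hv, rfl⟩, rfl⟩
      obtain rfl : g⁻¹ = w := (Set.mem_singleton_iff.mp hw).symm
      refine ⟨(k : G), ⟨k, hk, rfl⟩, ?_⟩
      rw [hf₂, QuotientGroup.eq]
      have e : (k * g⁻¹)⁻¹ * (k * g⁻¹ * v) = v := by group
      rw [e]; exact hv
  have hinj1 : Set.InjOn f₁ (QuotientGroup.mk '' (L : Set G)) := by
    rintro _ ⟨l, hl, rfl⟩ _ ⟨l', hl', rfl⟩ heq
    rw [hf₁, hf₁, QuotientGroup.eq] at heq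
    have e : (g * l)⁻¹ * (g * l') = l⁻¹ * l' := by group
    rw [e] at heq
    rw [QuotientGroup.eq]
    exact Subgroup.mem_inf.mpr ⟨heq, L.mul_mem (L.inv_mem hl) hl'⟩
  have hinj2 : Set.InjOn f₂ (QuotientGroup.mk '' s) := by
    rintro _ ⟨k, hk, rfl⟩ _ ⟨k', hk', rfl⟩ heq
    rw [hf₂, hf₂, QuotientGroup.eq] at heq
    have e : (k * g⁻¹)⁻¹ * (k' * g⁻¹) = g * (k⁻¹ * k') * g⁻¹ := by group
    rw [e] at heq
    rw [QuotientGroup.eq]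
    exact Subgroup.mem_inf.mpr ⟨K.mul_mem (K.inv_mem hk) hk', (hmemL _).mpr heq⟩
  have hcard1 : (QuotientGroup.mk '' (s * {g} * s) : Set (G ⧸ K)).ncard
      = (QuotientGroup.mk '' (L : Set G) : Set (G ⧸ H)).ncard := by
    rw [← himg1, Set.ncard_image_of_injOn hinj1]
  have hcard2 : (QuotientGroup.mk '' (s * {g⁻¹} * s) : Set (G ⧸ K)).ncard
      = (QuotientGroup.mk '' s : Set (G ⧸ H)).ncard := by
    rw [← himg2, Set.ncard_image_of_injOn hinj2]
  have hKg : μ (s * {g}) = μ (L : Set G) := by rw [← hgL, measure_smul]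
  rw [hKg, hm1, hm2, hmL, hmK, hcard1, hcard2]
  ring
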